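/- Let q be a prime power, n ≥ 1, and f : F_q^n → F_q^n an arbitrary function. For k ∈ F_q^n define g_k(x) := f(x) + (k_1 x_1, ..., k_n x_n). If A is uniform on F_q^n, then the average over k ∈ F_q^n of the Rényi entropy H_2(g_k(A)) is at least log_2(q^n) - n·log_2(2 - 1/q). -/

import Mathlib

open Finset

/-- Probability mass of value `y` under the pushforward of the uniform
distribution on `α` along `g`. -/
noncomputable def mass {α β : Type*} [Fintype α] [DecidableEq β]
    (g : α → β) (y : β) : ℝ :=
  (Finset.univ.filter (fun x => g x = y)).card / (Fintype.card α : ℝ)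

/-- Collision probability of `g(A)` for `A` uniform on `α`. -/
noncomputable def collProb {α β : Type*} [Fintype α] [Fintype β] [DecidableEq β]
    (g : α → β) : ℝ :=
  ∑ y, (mass g y) ^ 2

/-- Shannon entropy (base 2) of `g(A)` for `A` uniform on `α`.
(Terms with zero mass contribute `0` since `Real.logb 2 0 = 0`.) -/
noncomputable def shannon {α β : Type*} [Fintype α] [Fintype β] [DecidableEq β]
    (g : α → β) : ℝ :=
  -∑ y, mass g y * Real.logb 2 (mass g y)

/-- Rényi entropy (base 2) of `g(A)` for `A` uniform on `α`. -/
noncomputable def renyi2 {α β : Type*} [Fintype α] [Fintype β] [DecidableEq β]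
    (g : α → β) : ℝ :=
  -Real.logb 2 (collProb g)

-- auxiliary lemmas

lemma card_collision {α β : Type*} [Fintype α] [DecidableEq β] [Fintype β]
    (g : α → β) :
    (univ.filter fun p : α × α => g p.1 = g p.2).card =
      ∑ y : β, (univ.filter fun x => g x = y).card ^ 2 := by
  rw [Finset.card_eq_sum_card_fiberwise (f := fun p : α × α => g p.1) (t := univ)
    (fun _ _ => mem_univ _)]
  refine Finset.sum_congr rfl fun y _ => ?_
  rw [Finset.filter_filter]
  have h : (univ.filter fun p : α × α => g p.1 = g p.2 ∧ g p.1 = y)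
      = (univ.filter fun x => g x = y) ×ˢ (univ.filter fun x => g x = y) := by
    ext p
    simp only [mem_filter, mem_univ, true_and, Finset.mem_product]
    constructor
    · rintro ⟨h1, h2⟩; exact ⟨h2, h1 ▸ h2⟩
    · rintro ⟨h1, h2⟩; exact ⟨h1.trans h2.symm, h1⟩
  rw [h, Finset.card_product, sq]

lemma collProb_eq {α β : Type*} [Fintype α] [Fintype β] [DecidableEq β]
    (g : α → β) :
    collProb g = ((univ.filter fun p : α × α => g p.1 = g p.2).card : ℝ) /
      ((Fintype.card α : ℝ)) ^ 2 := by
  rw [card_collision, collProb]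
  push_cast
  rw [Finset.sum_div]
  refine Finset.sum_congr rfl fun y _ => ?_
  rw [mass, div_pow]

lemma collProb_pos {α β : Type*} [Fintype α] [Fintype β] [DecidableEq β]
    [Nonempty α] (g : α → β) : 0 < collProb g := by
  obtain ⟨a⟩ := ‹Nonempty α›
  have h1 : 0 < mass g (g a) := by
    rw [mass]
    apply div_pos
    · have : a ∈ univ.filter fun x => g x = g a := by simp
      exact_mod_cast Finset.card_pos.2 ⟨a, this⟩
    · exact_mod_cast Fintype.card_pos
  refine Finset.sum_pos' (fun y _ => sq_nonneg _) ⟨g a, mem_univ _, by positivity⟩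

lemma concaveOn_logb : ConcaveOn ℝ (Set.Ioi 0) (Real.logb 2) := by
  have h := (strictConcaveOn_log_Ioi).concaveOn
  have := h.smul (c := (Real.log 2)⁻¹) (by positivity)
  suffices e : Real.logb 2 = fun x => (Real.log 2)⁻¹ • Real.log x by rw [e]; exact this
  ext x
  simp [Real.logb, div_eq_inv_mul, smul_eq_mul]


lemma aux_ite (q : ℕ) (h : 2 ≤ q) (P : Prop) [Decidable P] :
    (if P then q else 1) = (if P then q - 1 else 0) + 1 := by
  split_ifs <;> omega

lemma aux_arith (q : ℕ) (h : 2 ≤ q) : q - 1 + q = 2 * q - 1 := by omega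

lemma count_le (q n : ℕ) (F : Type*) [Field F] [Fintype F] [DecidableEq F]
    (hq : Fintype.card F = q) (f : (Fin n → F) → (Fin n → F)) :
    ∑ k : Fin n → F,
      (univ.filter fun p : (Fin n → F) × (Fin n → F) =>
        ∀ i, f p.1 i + k i * p.1 i = f p.2 i + k i * p.2 i).card
      ≤ (q * (2 * q - 1)) ^ n := by
  classical
  have hq2 : 2 ≤ q := hq ▸ Fintype.one_lt_card
  -- swap the order of summation
  have hswap : ∑ k : Fin n → F,
      (univ.filter fun p : (Fin n → F) × (Fin n → F) =>
        ∀ i, f p.1 i + k i * p.1 i = f p.2 i + k i * p.2 i).card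
      = ∑ p : (Fin n → F) × (Fin n → F),
        (univ.filter fun k : Fin n → F =>
          ∀ i, f p.1 i + k i * p.1 i = f p.2 i + k i * p.2 i).card := by
    simp only [Finset.card_filter]
    exact Finset.sum_comm
  rw [hswap]
  -- bound each inner count
  have hinner : ∀ p : (Fin n → F) × (Fin n → F),
      (univ.filter fun k : Fin n → F =>
        ∀ i, f p.1 i + k i * p.1 i = f p.2 i + k i * p.2 i).card
      ≤ ∏ i, (if p.1 i = p.2 i then q else 1) := by
    intro p
    have hpi : (univ.filter fun k : Fin n → F =>
        ∀ i, f p.1 i + k i * p.1 i = f p.2 i + k i * p.2 i)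
        = Fintype.piFinset (fun i =>
            univ.filter fun c : F => f p.1 i + c * p.1 i = f p.2 i + c * p.2 i) := by
      ext k
      simp [Fintype.mem_piFinset]
    rw [hpi, Fintype.card_piFinset]
    refine Finset.prod_le_prod' fun i _ => ?_
    by_cases h : p.1 i = p.2 i
    · rw [if_pos h]
      calc (univ.filter fun c : F => f p.1 i + c * p.1 i = f p.2 i + c * p.2 i).card
          ≤ (univ : Finset F).card := Finset.card_filter_le _ _
        _ = q := by rw [Finset.card_univ, hq]
    · rw [if_neg h]
      refine Finset.card_le_one.2 fun a ha b hb => ?_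
      rw [Finset.mem_filter] at ha hb
      have hab : a * (p.1 i - p.2 i) = b * (p.1 i - p.2 i) := by
        have h1 := ha.2; have h2 := hb.2
        ring_nf
        ring_nf at h1 h2
        linear_combination h1 - h2
      exact mul_right_cancel₀ (sub_ne_zero.2 h) hab
  calc ∑ p : (Fin n → F) × (Fin n → F),
        (univ.filter fun k : Fin n → F =>
          ∀ i, f p.1 i + k i * p.1 i = f p.2 i + k i * p.2 i).card
      ≤ ∑ p : (Fin n → F) × (Fin n → F), ∏ i, (if p.1 i = p.2 i then q else 1) :=
        Finset.sum_le_sum fun p _ => hinner p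
    _ = ∑ z : Fin n → F × F, ∏ i, (if (z i).1 = (z i).2 then q else 1) := by
        refine Fintype.sum_equiv (Equiv.arrowProdEquivProdArrow (Fin n) (fun _ => F) (fun _ => F)).symm _ _ ?_
        intro z
        rfl
    _ = ∏ i : Fin n, ∑ t : F × F, (if t.1 = t.2 then q else 1) := by
        rw [← Finset.sum_prod_piFinset (univ : Finset (F × F))
          (fun (_ : Fin n) (t : F × F) => if t.1 = t.2 then q else 1)]
        rw [Fintype.piFinset_univ]
    _ = (q * (2 * q - 1)) ^ n := by
        have h1 : ∀ a : F, (∑ b : F, if a = b then q else 1) = 2 * q - 1 := by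
          intro a
          rw [Finset.sum_congr rfl (fun b _ => aux_ite q hq2 (a = b)),
            Finset.sum_add_distrib, Finset.sum_ite_eq]
          simp [Finset.card_univ, hq]
          exact aux_arith q hq2
        have h2 : (∑ t : F × F, if t.1 = t.2 then q else 1) = q * (2 * q - 1) := by
          rw [Fintype.sum_prod_type]
          simp only [h1]
          rw [Finset.sum_const, Finset.card_univ, hq, smul_eq_mul]
        rw [h2, Finset.prod_const, Finset.card_univ, Fintype.card_fin]

theorem stmt2 (q n : ℕ) (hn : 1 ≤ n) (F : Type*) [Field F] [Fintype F] [DecidableEq F]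
    (hq : Fintype.card F = q) (f : (Fin n → F) → (Fin n → F)) :
    Real.logb 2 ((q : ℝ) ^ n) - n * Real.logb 2 (2 - 1 / (q : ℝ)) ≤
      (1 / (q : ℝ) ^ n) *
        ∑ k : Fin n → F, renyi2 (fun x i => f x i + k i * x i) := by
  classical
  set g : (Fin n → F) → (Fin n → F) → (Fin n → F) := fun k x i => f x i + k i * x i with hg
  have hq2 : 2 ≤ q := hq ▸ Fintype.one_lt_card
  have hq0 : (0 : ℝ) < q := by exact_mod_cast Nat.lt_of_lt_of_le (by norm_num) hq2
  have hqn0 : (0 : ℝ) < (q : ℝ) ^ n := by positivity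
  have hcard : Fintype.card (Fin n → F) = q ^ n := by
    simp [Fintype.card_fun, hq]
  have hR : (0 : ℝ) < 2 - 1 / (q : ℝ) := by
    have : 1 / (q : ℝ) ≤ 1 := by
      rw [div_le_one hq0]; exact_mod_cast Nat.le_of_lt (by omega)
    linarith
  -- collision probability formula
  have hCP : ∀ k : Fin n → F, collProb (g k) =
      ((univ.filter fun p : (Fin n → F) × (Fin n → F) =>
        ∀ i, f p.1 i + k i * p.1 i = f p.2 i + k i * p.2 i).card : ℝ) / ((q : ℝ) ^ n) ^ 2 := by
    intro k
    rw [collProb_eq]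
    rw [hcard]
    congr 1
    · norm_cast
      apply congr_arg Finset.card
      apply Finset.filter_congr
      intro p _
      simp [hg, funext_iff]
    · push_cast; ring
  -- average collision probability bound
  have havg : (1 / (q : ℝ) ^ n) * ∑ k : Fin n → F, collProb (g k) ≤
      (2 - 1 / (q : ℝ)) ^ n / (q : ℝ) ^ n := by
    have hsum : ∑ k : Fin n → F, collProb (g k) ≤
        (((q * (2 * q - 1)) ^ n : ℕ) : ℝ) / ((q : ℝ) ^ n) ^ 2 := by
      rw [Finset.sum_congr rfl fun k _ => hCP k, ← Finset.sum_div]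
      apply div_le_div_of_nonneg_right ?_ (by positivity)
      exact_mod_cast count_le q n F hq f
    have hcast : (((q * (2 * q - 1)) ^ n : ℕ) : ℝ) = ((q : ℝ) * (2 * q - 1)) ^ n := by
      have h1 : ((2 * q - 1 : ℕ) : ℝ) = 2 * (q : ℝ) - 1 := by
        rw [Nat.cast_sub (by omega)]; push_cast; ring
      push_cast [h1]; ring
    have hbound : (1 / (q : ℝ) ^ n) * ((((q * (2 * q - 1)) ^ n : ℕ) : ℝ) / ((q : ℝ) ^ n) ^ 2)
        = (2 - 1 / (q : ℝ)) ^ n / (q : ℝ) ^ n := by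
      rw [hcast]
      have h2q : (2 - 1 / (q : ℝ)) = (2 * (q : ℝ) - 1) / q := by
        field_simp
      rw [h2q, div_pow, mul_pow]
      field_simp
    calc (1 / (q : ℝ) ^ n) * ∑ k : Fin n → F, collProb (g k)
        ≤ (1 / (q : ℝ) ^ n) * ((((q * (2 * q - 1)) ^ n : ℕ) : ℝ) / ((q : ℝ) ^ n) ^ 2) := by
          apply mul_le_mul_of_nonneg_left hsum (by positivity)
      _ = (2 - 1 / (q : ℝ)) ^ n / (q : ℝ) ^ n := hbound
  have hpos : ∀ k : Fin n → F, 0 < collProb (g k) := fun k => collProb_pos (g k)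
  -- Jensen
  have hw1 : ∑ _k : Fin n → F, (1 / (q : ℝ) ^ n) = 1 := by
    rw [Finset.sum_const, Finset.card_univ, hcard, nsmul_eq_mul]
    push_cast
    field_simp
  have hj := concaveOn_logb.le_map_sum (t := (univ : Finset (Fin n → F)))
    (w := fun _ => 1 / (q : ℝ) ^ n) (p := fun k => collProb (g k))
    (fun _ _ => by positivity) hw1 (fun k _ => hpos k)
  simp only [smul_eq_mul] at hj
  rw [← Finset.mul_sum, ← Finset.mul_sum] at hj
  -- bound the log of the average
  have havgpos : 0 < (1 / (q : ℝ) ^ n) * ∑ k : Fin n → F, collProb (g k) := by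
    apply mul_pos (by positivity)
    exact Finset.sum_pos (fun k _ => hpos k) univ_nonempty
  have hlog : Real.logb 2 ((1 / (q : ℝ) ^ n) * ∑ k : Fin n → F, collProb (g k)) ≤
      (n : ℝ) * Real.logb 2 (2 - 1 / (q : ℝ)) - Real.logb 2 ((q : ℝ) ^ n) := by
    calc Real.logb 2 ((1 / (q : ℝ) ^ n) * ∑ k : Fin n → F, collProb (g k))
        ≤ Real.logb 2 ((2 - 1 / (q : ℝ)) ^ n / (q : ℝ) ^ n) :=
          Real.logb_le_logb_of_le (by norm_num) havgpos havg
      _ = (n : ℝ) * Real.logb 2 (2 - 1 / (q : ℝ)) - Real.logb 2 ((q : ℝ) ^ n) := by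
          rw [Real.logb_div (by positivity) (by positivity), Real.logb_pow]
  -- conclude
  have hren : ∑ k : Fin n → F, renyi2 (g k) = -∑ k : Fin n → F, Real.logb 2 (collProb (g k)) := by
    simp only [renyi2]
    exact Finset.sum_neg_distrib _
  have : (1 / (q : ℝ) ^ n) * ∑ k : Fin n → F, renyi2 (g k)
      = -((1 / (q : ℝ) ^ n) * ∑ k : Fin n → F, Real.logb 2 (collProb (g k))) := by
    rw [hren]; ring
  rw [show (fun k : Fin n → F => renyi2 fun x i => f x i + k i * x i)
    = fun k => renyi2 (g k) from rfl] at *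
  rw [this]
  linarith
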